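/- arXiv:1702.01012 — 4 statements merged into one kernel-verified Lean document; each statement's English description precedes it below -/
import Mathlib

section
/- Let p, q, r, s be real numbers with p ≤ s, q ∈ [p,s] and r ∈ [p,s]. Then for every n ≥ 1 and every vector v = (v_1,…,v_n) of positive reals, G_{p,q}(v) ≤ G_{r,s}(v). -/
open Finset in
/-- Gini mean of a vector of positive reals with real parameters `p`, `q`. -/
noncomputable def gini (p q : ℝ) {n : ℕ} (v : Fin n → ℝ) : ℝ :=
  if p = q then
    Real.exp ((∑ i, v i ^ p * Real.log (v i)) / ∑ i, v i ^ p)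
  else
    ((∑ i, v i ^ p) / ∑ i, v i ^ q) ^ (1 / (p - q))

open Finset Real in
/-- if p ≤ s, q ∈ [p,s], r ∈ [p,s], then G_{p,q} ≤ G_{r,s} on every
vector of positive reals. -/
theorem stmt_1 (p q r s : ℝ) (hps : p ≤ s) (hq : q ∈ Set.Icc p s) (hr : r ∈ Set.Icc p s) :
    ∀ n : ℕ, 1 ≤ n → ∀ v : Fin n → ℝ, (∀ i, 0 < v i) →
      gini p q v ≤ gini r s v := by
  obtain ⟨hpq, hqs⟩ := hq
  obtain ⟨hpr, hrs⟩ := hr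
  intro n hn v hv
  have hnn : Nonempty (Fin n) := Fin.pos_iff_nonempty.mp hn
  have hne : (Finset.univ : Finset (Fin n)).Nonempty := Finset.univ_nonempty
  -- the auxiliary functions
  set S : ℝ → ℝ := fun t => ∑ i, v i ^ t with hS
  set S1 : ℝ → ℝ := fun t => ∑ i, v i ^ t * Real.log (v i) with hS1
  set S2 : ℝ → ℝ := fun t => ∑ i, v i ^ t * Real.log (v i) ^ 2 with hS2
  set f : ℝ → ℝ := fun t => Real.log (S t) with hf
  set g : ℝ → ℝ := fun t => S1 t / S t with hg
  have hSpos : ∀ t, 0 < S t := fun t =>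
    Finset.sum_pos (fun i _ => Real.rpow_pos_of_pos (hv i) t) hne
  have hdS : ∀ t, HasDerivAt S (S1 t) t := by
    intro t
    exact HasDerivAt.fun_sum fun i _ =>
      (Real.hasStrictDerivAt_const_rpow (hv i) t).hasDerivAt
  have hdS1 : ∀ t, HasDerivAt S1 (S2 t) t := by
    intro t
    have h : ∀ i : Fin n, HasDerivAt (fun u => v i ^ u * Real.log (v i))
        (v i ^ t * Real.log (v i) ^ 2) t := by
      intro i
      have := ((Real.hasStrictDerivAt_const_rpow (hv i) t).hasDerivAt).mul_const
        (Real.log (v i))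
      rw [sq, ← mul_assoc]
      exact this
    exact HasDerivAt.fun_sum fun i _ => h i
  have hdf : ∀ t, HasDerivAt f (g t) t := fun t => (hdS t).log (hSpos t).ne'
  have hderiv : deriv f = g := funext fun t => (hdf t).deriv
  have hdg : ∀ t, HasDerivAt g ((S2 t * S t - S1 t * S1 t) / S t ^ 2) t :=
    fun t => (hdS1 t).div (hdS t) (hSpos t).ne'
  -- Cauchy-Schwarz : S1 t ^ 2 ≤ S t * S2 t
  have key : ∀ t, S1 t * S1 t ≤ S t * S2 t := by
    intro t
    have h := Finset.sum_mul_sq_le_sq_mul_sq Finset.univ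
      (fun i => v i ^ (t / 2)) (fun i => v i ^ (t / 2) * Real.log (v i))
    have e1 : ∀ i : Fin n, v i ^ (t / 2) * (v i ^ (t / 2) * Real.log (v i))
        = v i ^ t * Real.log (v i) := by
      intro i
      rw [← mul_assoc, ← Real.rpow_add (hv i)]
      norm_num
    have e2 : ∀ i : Fin n, (v i ^ (t / 2)) ^ 2 = v i ^ t := by
      intro i
      rw [sq, ← Real.rpow_add (hv i)]
      norm_num
    have e3 : ∀ i : Fin n, (v i ^ (t / 2) * Real.log (v i)) ^ 2
        = v i ^ t * Real.log (v i) ^ 2 := by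
      intro i
      rw [mul_pow, e2 i]
    calc S1 t * S1 t = (∑ i, v i ^ (t / 2) * (v i ^ (t / 2) * Real.log (v i))) ^ 2 := by
          rw [← sq]; congr 1; exact (Finset.sum_congr rfl fun i _ => (e1 i).symm)
      _ ≤ (∑ i, (v i ^ (t / 2)) ^ 2) * ∑ i, (v i ^ (t / 2) * Real.log (v i)) ^ 2 := h
      _ = S t * S2 t := by
          congr 1
          · exact Finset.sum_congr rfl fun i _ => e2 i
          · exact Finset.sum_congr rfl fun i _ => e3 i
  -- convexity of f
  have hconv : ConvexOn ℝ Set.univ f := by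
    apply convexOn_univ_of_deriv2_nonneg (fun t => (hdf t).differentiableAt)
    · rw [hderiv]
      exact fun t => (hdg t).differentiableAt
    · intro t
      have h2 : deriv^[2] f t = deriv (deriv f) t := by
        simp [Function.iterate_succ_apply']
      rw [h2, hderiv, (hdg t).deriv]
      apply div_nonneg _ (sq_nonneg _)
      linarith [key t]
  -- slope facts
  have hslope : ∀ a b : ℝ, a < b → slope f a b ≤ g b :=
    fun a b hab => hconv.slope_le_of_hasDerivAt trivial trivial hab (hdf b)
  have hslope' : ∀ a b : ℝ, a < b → g a ≤ slope f a b :=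
    fun a b hab => hconv.le_slope_of_hasDerivAt trivial trivial hab (hdf a)
  have hgmono : ∀ a b : ℝ, a ≤ b → g a ≤ g b := by
    intro a b hab
    rcases eq_or_lt_of_le hab with rfl | h
    · exact le_rfl
    · exact (hslope' a b h).trans (hslope a b h)
  -- rewriting gini in terms of f, g
  have hgini_eq : ∀ a : ℝ, gini a a v = Real.exp (g a) := by
    intro a
    rw [gini, if_pos rfl]
  have hgini_ne : ∀ a b : ℝ, a ≠ b → gini a b v = Real.exp (slope f a b) := by
    intro a b hab
    rw [gini, if_neg hab,
      Real.rpow_def_of_pos (div_pos (hSpos a) (hSpos b)),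
      Real.log_div (hSpos a).ne' (hSpos b).ne', slope_def_field, mul_one_div]
    congr 1
    rw [div_eq_div_iff (sub_ne_zero.mpr hab) (sub_ne_zero.mpr (Ne.symm hab))]
    ring
  have hmono := fun x : ℝ => hconv.slope_mono (Set.mem_univ x)
  have hmem : ∀ x y : ℝ, y ≠ x → y ∈ Set.univ \ {x} := by
    intro x y h
    exact ⟨Set.mem_univ _, by simpa using h⟩
  -- case analysis
  by_cases hpq' : p = q
  · subst hpq'
    rw [hgini_eq p]
    by_cases hrs' : r = s
    · subst hrs'
      rw [hgini_eq r]
      exact Real.exp_le_exp.mpr (hgmono p r hpr)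
    · have hrlt : r < s := lt_of_le_of_ne hrs hrs'
      rw [hgini_ne r s hrs']
      exact Real.exp_le_exp.mpr ((hgmono p r hpr).trans (hslope' r s hrlt))
  · have hplt : p < q := lt_of_le_of_ne hpq hpq'
    rw [hgini_ne p q hpq']
    by_cases hrs' : r = s
    · subst hrs'
      rw [hgini_eq r]
      exact Real.exp_le_exp.mpr ((hslope p q hplt).trans (hgmono q r (hqs.trans hrs)))
    · have hrlt : r < s := lt_of_le_of_ne hrs hrs'
      rw [hgini_ne r s hrs']
      apply Real.exp_le_exp.mpr
      have hpslt : p < s := hplt.trans_le hqs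
      have h1 : slope f p q ≤ slope f p s :=
        hmono p (hmem p q (Ne.symm hpq')) (hmem p s hpslt.ne') hqs
      have h2 : slope f s p ≤ slope f s r :=
        hmono s (hmem s p hpslt.ne) (hmem s r hrlt.ne) hpr
      calc slope f p q ≤ slope f p s := h1
        _ = slope f s p := slope_comm f p s
        _ ≤ slope f s r := h2
        _ = slope f r s := slope_comm f s r
end

section
/- Let p, q, r, s be real numbers with p ≤ s, q ∈ [p,s] and r ∈ [p,s]. Then for all real x, y the following are equivalent: (i) for every n ≥ 1 and every vector v of n positive reals, G_{p,q}(v) ≤ G_{x,y}(v) and G_{x,y}(v) ≤ G_{r,s}(v); (ii) (x,y) ∈ ([p,r] × [q,s]) ∪ ([q,s] × [p,r]). -/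
set_option maxHeartbeats 1000000


namespace GiniAux

open Real Finset

variable {n : ℕ}

/-- `F v t = ∑ v i ^ t`. -/
noncomputable def F (v : Fin n → ℝ) (t : ℝ) : ℝ := ∑ i, v i ^ t

/-- numerator of the derivative. -/
noncomputable def N (v : Fin n → ℝ) (t : ℝ) : ℝ := ∑ i, v i ^ t * Real.log (v i)

noncomputable def f (v : Fin n → ℝ) (t : ℝ) : ℝ := Real.log (F v t)

noncomputable def G (v : Fin n → ℝ) (t : ℝ) : ℝ := N v t / F v t

/-- generalized slope, equal to derivative on the diagonal. -/
noncomputable def Sl (v : Fin n → ℝ) (a b : ℝ) : ℝ :=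
  if a = b then G v a else slope (f v) a b

variable {v : Fin n → ℝ}

lemma F_pos (hn : 0 < n) (hv : ∀ i, 0 < v i) (t : ℝ) : 0 < F v t := by
  haveI : Nonempty (Fin n) := Fin.pos_iff_nonempty.1 hn
  exact Finset.sum_pos (fun i _ => Real.rpow_pos_of_pos (hv i) t) Finset.univ_nonempty

lemma hasDerivAt_F (hv : ∀ i, 0 < v i) (t : ℝ) : HasDerivAt (F v) (N v t) t := by
  have : HasDerivAt (fun t => ∑ i : Fin n, v i ^ t)
      (∑ i : Fin n, v i ^ t * Real.log (v i)) t :=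
    HasDerivAt.fun_sum (fun i _ => (Real.hasStrictDerivAt_const_rpow (hv i) t).hasDerivAt)
  exact this

lemma hasDerivAt_f (hn : 0 < n) (hv : ∀ i, 0 < v i) (t : ℝ) :
    HasDerivAt (f v) (G v t) t := by
  have h := (Real.hasDerivAt_log (F_pos hn hv t).ne').comp t (hasDerivAt_F hv t)
  have : G v t = (F v t)⁻¹ * N v t := by rw [G, div_eq_inv_mul]
  rw [this]
  exact h

lemma convexOn_f (hn : 0 < n) (hv : ∀ i, 0 < v i) : ConvexOn ℝ Set.univ (f v) := by
  refine ⟨convex_univ, fun A _ B _ la mu hla hmu hlamu => ?_⟩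
  rcases hla.eq_or_lt with h0 | hla
  · have hmu1 : mu = 1 := by linarith
    simp [← h0, hmu1]
  rcases hmu.eq_or_lt with h0 | hmu
  · have hla1 : la = 1 := by linarith
    simp [← h0, hla1]
  have hla1 : la < 1 := by linarith
  have hP : Real.HolderConjugate (1/la) (1/mu) := by
    constructor
    · rw [one_div, one_div, inv_inv, inv_inv, inv_one]; exact hlamu
    · positivity
    · positivity
  have key : F v (la*A + mu*B) ≤ (F v A) ^ la * (F v B) ^ mu := by
    have h := Real.inner_le_Lp_mul_Lq_of_nonneg (s := Finset.univ)
      (f := fun i => v i ^ (la*A)) (g := fun i => v i ^ (mu*B)) hP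
      (fun i _ => (Real.rpow_pos_of_pos (hv i) _).le)
      (fun i _ => (Real.rpow_pos_of_pos (hv i) _).le)
    have e1 : ∀ i : Fin n, v i ^ (la*A) * v i ^ (mu*B) = v i ^ (la*A + mu*B) := by
      intro i; rw [← Real.rpow_add (hv i)]
    have e2 : ∀ i : Fin n, (v i ^ (la*A)) ^ (1/la) = v i ^ A := by
      intro i
      rw [← Real.rpow_mul (hv i).le]
      congr 1
      field_simp
    have e3 : ∀ i : Fin n, (v i ^ (mu*B)) ^ (1/mu) = v i ^ B := by
      intro i
      rw [← Real.rpow_mul (hv i).le]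
      congr 1
      field_simp
    have e4 : (1 : ℝ) / (1/la) = la := one_div_one_div la
    have e5 : (1 : ℝ) / (1/mu) = mu := one_div_one_div mu
    calc F v (la*A + mu*B) = ∑ i, v i ^ (la*A) * v i ^ (mu*B) := by
          rw [F]; exact (Finset.sum_congr rfl fun i _ => (e1 i).symm)
      _ ≤ (∑ i, (v i ^ (la*A)) ^ (1/la)) ^ (1/(1/la)) *
            (∑ i, (v i ^ (mu*B)) ^ (1/mu)) ^ (1/(1/mu)) := h
      _ = (F v A) ^ la * (F v B) ^ mu := by
          rw [e4, e5, F, F,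
            Finset.sum_congr rfl fun i _ => e2 i, Finset.sum_congr rfl fun i _ => e3 i]
  have hFA := F_pos hn hv A
  have hFB := F_pos hn hv B
  have hFc := F_pos hn hv (la*A + mu*B)
  have : f v (la*A + mu*B) ≤ la * f v A + mu * f v B := by
    calc f v (la*A + mu*B) ≤ Real.log ((F v A) ^ la * (F v B) ^ mu) :=
          Real.log_le_log hFc key
      _ = la * f v A + mu * f v B := by
          rw [Real.log_mul (Real.rpow_pos_of_pos hFA la).ne' (Real.rpow_pos_of_pos hFB mu).ne',
            Real.log_rpow hFA, Real.log_rpow hFB, f, f]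
  simpa [smul_eq_mul] using this

lemma Sl_symm (a b : ℝ) : Sl v a b = Sl v b a := by
  rcases eq_or_ne a b with rfl | hab
  · rfl
  · rw [Sl, Sl, if_neg hab, if_neg (Ne.symm hab), slope_comm]

lemma Sl_mono_right (hn : 0 < n) (hv : ∀ i, 0 < v i) {a b b' : ℝ} (h : b ≤ b') :
    Sl v a b ≤ Sl v a b' := by
  rcases h.eq_or_lt with rfl | hlt
  · exact le_refl _
  have cf := convexOn_f hn hv
  by_cases hab : a = b
  · subst hab
    rw [Sl, if_pos rfl, Sl, if_neg hlt.ne]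
    exact cf.le_slope_of_hasDerivAt (Set.mem_univ a) (Set.mem_univ b') hlt
      (hasDerivAt_f hn hv a)
  by_cases hab' : a = b'
  · subst hab'
    rw [Sl, if_neg hab, Sl, if_pos rfl, slope_comm]
    exact cf.slope_le_of_hasDerivAt (Set.mem_univ b) (Set.mem_univ a)
      (lt_of_le_of_ne hlt.le (Ne.symm hab)) (hasDerivAt_f hn hv a)
  · rw [Sl, if_neg hab, Sl, if_neg hab']
    exact cf.slope_mono (Set.mem_univ a)
      ⟨Set.mem_univ b, by simpa using Ne.symm hab⟩
      ⟨Set.mem_univ b', by simpa using Ne.symm hab'⟩ h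

lemma Sl_mono_left (hn : 0 < n) (hv : ∀ i, 0 < v i) {a a' b : ℝ} (h : a ≤ a') :
    Sl v a b ≤ Sl v a' b := by
  rw [Sl_symm a b, Sl_symm a' b]
  exact Sl_mono_right hn hv h

lemma gini_eq (hn : 0 < n) (hv : ∀ i, 0 < v i) (a b : ℝ) :
    gini a b v = Real.exp (Sl v a b) := by
  by_cases hab : a = b
  · subst hab
    rw [gini, if_pos rfl, Sl, if_pos rfl]
    rfl
  · rw [gini, if_neg hab, Sl, if_neg hab]
    have hFa := F_pos hn hv a
    have hFb := F_pos hn hv b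
    rw [show (∑ i : Fin n, v i ^ a) = F v a from rfl, show (∑ i : Fin n, v i ^ b) = F v b from rfl]
    rw [Real.rpow_def_of_pos (div_pos hFa hFb)]
    congr 1
    rw [Real.log_div hFa.ne' hFb.ne', slope_def_field, f, f, mul_one_div,
      ← neg_sub (Real.log (F v b)) (Real.log (F v a)), ← neg_sub b a, neg_div_neg_eq]

lemma gini_pos (hn : 0 < n) (hv : ∀ i, 0 < v i) (a b : ℝ) : 0 < gini a b v := by
  rw [gini_eq hn hv]; exact Real.exp_pos _

lemma gini_symm (hn : 0 < n) (hv : ∀ i, 0 < v i) (a b : ℝ) :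
    gini a b v = gini b a v := by
  rw [gini_eq hn hv, gini_eq hn hv, Sl_symm]

lemma gini_mono_right (hn : 0 < n) (hv : ∀ i, 0 < v i) {a b b' : ℝ} (h : b ≤ b') :
    gini a b v ≤ gini a b' v := by
  rw [gini_eq hn hv, gini_eq hn hv]
  exact Real.exp_le_exp.2 (Sl_mono_right hn hv h)

lemma gini_mono_left (hn : 0 < n) (hv : ∀ i, 0 < v i) {a a' b : ℝ} (h : a ≤ a') :
    gini a b v ≤ gini a' b v := by
  rw [gini_eq hn hv, gini_eq hn hv]
  exact Real.exp_le_exp.2 (Sl_mono_left hn hv h)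

/-! ### The special vectors used for necessity -/

lemma sum_ite_fin (K m : ℕ) (X Y : ℝ) :
    ∑ i : Fin (K + m), (if (i : ℕ) < K then X else Y) = K * X + m * Y := by
  rw [Fin.sum_univ_eq_sum_range (fun i => if i < K then X else Y) (K + m)]
  rw [Finset.range_eq_Ico, ← Finset.sum_Ico_consecutive _ (Nat.zero_le K) (Nat.le_add_right K m)]
  have h1 : ∑ i ∈ Finset.Ico 0 K, (if i < K then X else Y) = K * X := by
    rw [Finset.sum_congr rfl (fun i hi => if_pos (Finset.mem_Ico.1 hi).2)]
    rw [Finset.sum_const, Nat.card_Ico, Nat.sub_zero, nsmul_eq_mul]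
  have h2 : ∑ i ∈ Finset.Ico K (K + m), (if i < K then X else Y) = m * Y := by
    rw [Finset.sum_congr rfl (fun i hi => if_neg (not_lt.2 (Finset.mem_Ico.1 hi).1))]
    rw [Finset.sum_const, Nat.card_Ico, Nat.add_sub_cancel_left, nsmul_eq_mul]
  rw [h1, h2]

/-- The core impossibility: `gini a b ≤ gini e e` everywhere fails if `b < a` and `e < a`. -/
lemma core (a b e : ℝ) (hba : b < a) (hea : e < a)
    (H : ∀ n : ℕ, 1 ≤ n → ∀ v : Fin n → ℝ, (∀ i, 0 < v i) →
      gini a b v ≤ gini e e v) : False := by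
  set δ : ℝ := (a - max b e) / 2 with hδdef
  have hδ : 0 < δ := by
    have : max b e < a := max_lt hba hea
    simp only [hδdef]; linarith
  set κ : ℝ := 1 + max 0 (-b) + max 0 (-e) with hκdef
  have hbκ : 1 ≤ b + κ := by
    have h1 : -b ≤ max 0 (-b) := le_max_right _ _
    have h2 : (0:ℝ) ≤ max 0 (-e) := le_max_left _ _
    simp only [hκdef]; linarith
  have heκ : 1 ≤ e + κ := by
    have h1 : -e ≤ max 0 (-e) := le_max_right _ _
    have h2 : (0:ℝ) ≤ max 0 (-b) := le_max_left _ _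
    simp only [hκdef]; linarith
  have hκ0 : 0 < κ := by
    have h1 : (0:ℝ) ≤ max 0 (-b) := le_max_left _ _
    have h2 : (0:ℝ) ≤ max 0 (-e) := le_max_left _ _
    simp only [hκdef]; linarith
  set θ : ℝ := max b e + κ + δ with hθdef
  have hθ1 : 1 ≤ θ := by
    have : b ≤ max b e := le_max_left _ _
    simp only [hθdef]; linarith
  have haκ : a + κ = θ + δ := by simp only [hθdef, hδdef]; ring
  have hbθ : b + κ ≤ θ - δ := by
    have : b ≤ max b e := le_max_left _ _
    simp only [hθdef]; linarith
  have heθ : e + κ ≤ θ - δ := by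
    have : e ≤ max b e := le_max_right _ _
    simp only [hθdef]; linarith
  -- choice of t
  set u : ℝ := max (4 * Real.log 4 / δ) (max (Real.log (4 * (a - b) / δ) / δ) 1) with hudef
  have hu1 : 1 ≤ u := le_max_of_le_right (le_max_right _ _)
  have hu0 : 0 < u := lt_of_lt_of_le one_pos hu1
  set t : ℝ := Real.exp u with htdef
  have ht1 : 1 < t := by
    rw [htdef, ← Real.exp_zero]
    exact Real.exp_lt_exp.2 hu0
  have ht0 : 0 < t := lt_trans one_pos ht1
  have hlogt : Real.log t = u := Real.log_exp u
  -- the numbers of repetitions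
  set K : ℕ := ⌈t ^ κ⌉₊ with hKdef
  set m : ℕ := ⌈t ^ θ⌉₊ with hmdef
  have htκ1 : (1:ℝ) ≤ t ^ κ := Real.one_le_rpow ht1.le hκ0.le
  have htθ1 : (1:ℝ) ≤ t ^ θ := Real.one_le_rpow ht1.le (by linarith)
  have hK1 : (1:ℝ) ≤ (K:ℝ) := le_trans htκ1 (Nat.le_ceil _)
  have hm1 : (1:ℝ) ≤ (m:ℝ) := le_trans htθ1 (Nat.le_ceil _)
  have hKlb : t ^ κ ≤ (K:ℝ) := Nat.le_ceil _
  have hmlb : t ^ θ ≤ (m:ℝ) := Nat.le_ceil _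
  have hKub : (K:ℝ) ≤ 2 * t ^ κ := by
    have : (K:ℝ) < t ^ κ + 1 := Nat.ceil_lt_add_one (Real.rpow_pos_of_pos ht0 κ).le
    calc (K:ℝ) ≤ t ^ κ + 1 := this.le
      _ ≤ 2 * t ^ κ := by linarith
  have hmub : (m:ℝ) ≤ 2 * t ^ θ := by
    have : (m:ℝ) < t ^ θ + 1 := Nat.ceil_lt_add_one (Real.rpow_pos_of_pos ht0 θ).le
    calc (m:ℝ) ≤ t ^ θ + 1 := this.le
      _ ≤ 2 * t ^ θ := by linarith
  -- the vector
  set v : Fin (K + m) → ℝ := fun i => if (i : ℕ) < K then t else 1 with hvdef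
  have hv : ∀ i, 0 < v i := by
    intro i; simp only [hvdef]; split <;> [exact ht0; exact one_pos]
  have hn1 : 1 ≤ K + m := by
    have : 1 ≤ K := Nat.one_le_cast.1 hK1
    omega
  -- sums
  have hsum : ∀ w : ℝ, ∑ i, v i ^ w = K * t ^ w + m := by
    intro w
    have : ∀ i : Fin (K + m), v i ^ w = if (i : ℕ) < K then t ^ w else 1 := by
      intro i; simp only [hvdef]; split
      · rfl
      · exact Real.one_rpow w
    rw [Finset.sum_congr rfl (fun i _ => this i), sum_ite_fin K m (t ^ w) 1, mul_one]
  have hsumlog : ∀ w : ℝ, ∑ i, v i ^ w * Real.log (v i) = K * (t ^ w * Real.log t) := by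
    intro w
    have : ∀ i : Fin (K + m), v i ^ w * Real.log (v i) =
        if (i : ℕ) < K then t ^ w * Real.log t else 0 := by
      intro i; simp only [hvdef]; split
      · rfl
      · simp
    rw [Finset.sum_congr rfl (fun i _ => this i), sum_ite_fin K m (t ^ w * Real.log t) 0,
      mul_zero, add_zero]
  -- the two sides
  have hSb_pos : (0:ℝ) < K * t ^ b + m := by positivity
  have hSa_pos : (0:ℝ) < K * t ^ a + m := by positivity
  have hDen_pos : (0:ℝ) < K * t ^ e + m := by positivity
  have hRHS : gini e e v = Real.exp ((K * (t ^ e * u)) / (K * t ^ e + m)) := by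
    rw [gini, if_pos rfl, hsumlog e, hsum e, hlogt]
  have hLHS : gini a b v =
      Real.exp ((Real.log (K * t ^ a + m) - Real.log (K * t ^ b + m)) / (a - b)) := by
    rw [gini, if_neg hba.ne', hsum a, hsum b,
      Real.rpow_def_of_pos (div_pos hSa_pos hSb_pos),
      Real.log_div hSa_pos.ne' hSb_pos.ne', mul_one_div]
  clear_value δ κ θ u t K m v
  have hab0 : 0 < a - b := by linarith
  have htδpos : (0:ℝ) < t ^ δ := Real.rpow_pos_of_pos ht0 δ
  have hKpos : (0:ℝ) < (K:ℝ) := lt_of_lt_of_le one_pos hK1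
  have hmpos : (0:ℝ) < (m:ℝ) := lt_of_lt_of_le one_pos hm1
  have htδ : 4 * (a - b) / δ ≤ t ^ δ := by
    have h1 : Real.log (4 * (a - b) / δ) / δ ≤ u := by
      rw [hudef]; exact le_max_of_le_right (le_max_left _ _)
    have h2 : Real.log (4 * (a - b) / δ) ≤ δ * u := by
      rw [div_le_iff₀ hδ] at h1; linarith [h1]
    have h3 : (0:ℝ) < 4 * (a - b) / δ := by positivity
    calc 4 * (a - b) / δ = Real.exp (Real.log (4 * (a - b) / δ)) := (Real.exp_log h3).symm
      _ ≤ Real.exp (δ * u) := Real.exp_le_exp.2 h2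
      _ = t ^ δ := by rw [htdef, ← Real.exp_mul]; ring_nf
  have hRHS_bound : (K * (t ^ e * u)) / (K * t ^ e + m) ≤ δ * u / (2 * (a - b)) := by
    have step1 : (K * (t ^ e * u)) / (K * t ^ e + m) ≤ (2 * t ^ κ * (t ^ e * u)) / t ^ θ := by
      apply div_le_div₀ (by positivity) _ (by positivity) _
      · have h0 : (0:ℝ) ≤ t ^ e * u := by positivity
        nlinarith [hKub]
      · have h5 : (0:ℝ) < K * t ^ e := by positivity
        linarith [hmlb]
    have step3 : (2 * t ^ κ * (t ^ e * u)) / t ^ θ = 2 * u * t ^ (κ + e - θ) := by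
      rw [Real.rpow_sub ht0, Real.rpow_add ht0]
      field_simp
    have step4 : t ^ (κ + e - θ) ≤ t ^ (-δ) :=
      Real.rpow_le_rpow_of_exponent_le ht1.le (by linarith)
    have step6 : 2 * u * t ^ (-δ) ≤ δ * u / (2 * (a - b)) := by
      rw [Real.rpow_neg ht0.le]
      have h4 : (0:ℝ) < 4 * (a - b) / δ := by positivity
      have hinv : (t ^ δ)⁻¹ ≤ (4 * (a - b) / δ)⁻¹ := inv_anti₀ h4 htδ
      calc 2 * u * (t ^ δ)⁻¹ ≤ 2 * u * (4 * (a - b) / δ)⁻¹ :=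
            mul_le_mul_of_nonneg_left hinv (by positivity)
        _ = δ * u / (2 * (a - b)) := by
            rw [inv_div]
            field_simp
            ring
    calc (K * (t ^ e * u)) / (K * t ^ e + m) ≤ (2 * t ^ κ * (t ^ e * u)) / t ^ θ := step1
      _ = 2 * u * t ^ (κ + e - θ) := step3
      _ ≤ 2 * u * t ^ (-δ) := mul_le_mul_of_nonneg_left step4 (by positivity)
      _ ≤ δ * u / (2 * (a - b)) := step6
  -- bound the LHS exponent from below
  have hSa_lb : (θ + δ) * u ≤ Real.log (K * t ^ a + m) := by
    have h1 : t ^ (θ + δ) ≤ K * t ^ a + m := by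
      have e1 : t ^ (θ + δ) = t ^ κ * t ^ a := by
        rw [← Real.rpow_add ht0, ← haκ]; ring_nf
      rw [e1]
      have h2 : t ^ κ * t ^ a ≤ K * t ^ a :=
        mul_le_mul_of_nonneg_right hKlb (by positivity)
      linarith [hmpos]
    calc (θ + δ) * u = Real.log (t ^ (θ + δ)) := by rw [Real.log_rpow ht0, hlogt]
      _ ≤ Real.log (K * t ^ a + m) := Real.log_le_log (Real.rpow_pos_of_pos ht0 _) h1
  have hSb_ub : Real.log (K * t ^ b + m) ≤ θ * u + Real.log 4 := by
    have h1 : K * t ^ b + m ≤ 4 * t ^ θ := by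
      have h2 : (K:ℝ) * t ^ b ≤ 2 * t ^ κ * t ^ b :=
        mul_le_mul_of_nonneg_right hKub (by positivity)
      have h3 : (2:ℝ) * t ^ κ * t ^ b = 2 * t ^ (κ + b) := by
        rw [Real.rpow_add ht0]; ring
      have h4 : t ^ (κ + b) ≤ t ^ θ :=
        Real.rpow_le_rpow_of_exponent_le ht1.le (by linarith)
      linarith [h2, h3, h4, hmub]
    calc Real.log (K * t ^ b + m) ≤ Real.log (4 * t ^ θ) := Real.log_le_log hSb_pos h1
      _ = θ * u + Real.log 4 := by
          rw [Real.log_mul (by norm_num) (Real.rpow_pos_of_pos ht0 θ).ne',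
            Real.log_rpow ht0, hlogt]; ring
  have hlog4 : Real.log 4 ≤ δ * u / 4 := by
    have h1 : 4 * Real.log 4 / δ ≤ u := by rw [hudef]; exact le_max_left _ _
    rw [div_le_iff₀ hδ] at h1
    linarith
  have hfinal : (K * (t ^ e * u)) / (K * t ^ e + m) <
      (Real.log (K * t ^ a + m) - Real.log (K * t ^ b + m)) / (a - b) := by
    have hnum : δ * u * (3/4) ≤ Real.log (K * t ^ a + m) - Real.log (K * t ^ b + m) := by
      linarith [hSa_lb, hSb_ub, hlog4]
    have hmid : δ * u / (2 * (a - b)) < (δ * u * (3/4)) / (a - b) := by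
      have hpos : 0 < δ * u / (a - b) := div_pos (mul_pos hδ hu0) hab0
      have hne : a - b ≠ 0 := hab0.ne'
      have e1 : δ * u / (2 * (a - b)) = (1/2) * (δ * u / (a - b)) := by
        field_simp
      have e2 : (δ * u * (3/4)) / (a - b) = (3/4) * (δ * u / (a - b)) := by
        field_simp
      rw [e1, e2]
      exact mul_lt_mul_of_pos_right (by norm_num) hpos
    calc (K * (t ^ e * u)) / (K * t ^ e + m) ≤ δ * u / (2 * (a - b)) := hRHS_bound
      _ < (δ * u * (3/4)) / (a - b) := hmid
      _ ≤ (Real.log (K * t ^ a + m) - Real.log (K * t ^ b + m)) / (a - b) := by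
          gcongr
  have := H (K + m) hn1 v hv
  rw [hRHS, hLHS] at this
  exact absurd this (not_le.2 (Real.exp_lt_exp.2 hfinal))

/-- necessity of the max condition. -/
lemma nec_max (a b c d : ℝ)
    (H : ∀ n : ℕ, 1 ≤ n → ∀ v : Fin n → ℝ, (∀ i, 0 < v i) →
      gini a b v ≤ gini c d v) : max a b ≤ max c d := by
  by_contra hcon
  push_neg at hcon
  set A := max a b with hA
  set C := max c d with hC
  set e := (C + A) / 2 with he
  have heA : e < A := by simp only [he]; linarith
  have hCe : C < e := by simp only [he]; linarith
  set B := min (min a b) e with hB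
  have hBA : B < A := by
    have : B ≤ e := min_le_right _ _
    linarith
  apply core A B e hBA heA
  intro k hk v hv
  have hk0 : 0 < k := hk
  have step1 : gini A B v ≤ gini a b v := by
    rcases le_total a b with hab | hab
    · have h1 : A = b := max_eq_right hab
      have h2 : min a b = a := min_eq_left hab
      have h3 : B ≤ a := by rw [hB, h2]; exact min_le_left _ _
      calc gini A B v = gini b B v := by rw [h1]
        _ ≤ gini b a v := gini_mono_right hk0 hv h3
        _ = gini a b v := (gini_symm hk0 hv a b).symm
    · have h1 : A = a := max_eq_left hab
      have h2 : min a b = b := min_eq_right hab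
      have h3 : B ≤ b := by rw [hB, h2]; exact min_le_left _ _
      calc gini A B v = gini a B v := by rw [h1]
        _ ≤ gini a b v := gini_mono_right hk0 hv h3
  have step2 : gini c d v ≤ gini e e v := by
    rcases le_total c d with hcd | hcd
    · have h1 : d = C := (max_eq_right hcd).symm
      have h2 : c ≤ e := le_trans (le_trans hcd (le_of_eq h1)) hCe.le
      have h3 : d ≤ e := by rw [h1]; exact hCe.le
      calc gini c d v ≤ gini e d v := gini_mono_left hk0 hv h2
        _ ≤ gini e e v := gini_mono_right hk0 hv h3
    · have h1 : c = C := (max_eq_left hcd).symm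
      have h2 : c ≤ e := by rw [h1]; exact hCe.le
      have h3 : d ≤ e := le_trans hcd (le_trans (le_of_eq h1) hCe.le)
      calc gini c d v ≤ gini e d v := gini_mono_left hk0 hv h2
        _ ≤ gini e e v := gini_mono_right hk0 hv h3
  exact le_trans step1 (le_trans (H k hk v hv) step2)

lemma gini_dual (a b : ℝ) (hv : ∀ i, 0 < v i) :
    gini (-a) (-b) (fun i => (v i)⁻¹) = (gini a b v)⁻¹ := by
  have hpow : ∀ (w : ℝ) (i : Fin n), ((v i)⁻¹) ^ (-w) = v i ^ w := by
    intro w i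
    rw [Real.inv_rpow (hv i).le, Real.rpow_neg (hv i).le, inv_inv]
  by_cases hab : a = b
  · subst hab
    rw [gini, if_pos rfl, gini, if_pos rfl, ← Real.exp_neg]
    congr 1
    have h1 : ∀ i : Fin n, ((v i)⁻¹) ^ (-a) * Real.log ((v i)⁻¹) =
        -(v i ^ a * Real.log (v i)) := by
      intro i
      rw [hpow a i, Real.log_inv]
      ring
    rw [Finset.sum_congr rfl fun i _ => h1 i, Finset.sum_congr rfl fun i _ => hpow a i,
      Finset.sum_neg_distrib, neg_div]
  · have hab' : (-a) ≠ (-b) := fun h => hab (neg_injective h)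
    rw [gini, if_neg hab', gini, if_neg hab]
    rw [Finset.sum_congr rfl fun i _ => hpow a i, Finset.sum_congr rfl fun i _ => hpow b i]
    have hX : (0:ℝ) ≤ (∑ i, v i ^ a) / ∑ i, v i ^ b := by
      apply div_nonneg <;>
        exact Finset.sum_nonneg fun i _ => (Real.rpow_pos_of_pos (hv i) _).le
    rw [← Real.rpow_neg hX]
    congr 1
    rw [show (-a - -b : ℝ) = -(a - b) from by ring, div_neg]

lemma nec_min (a b c d : ℝ)
    (H : ∀ n : ℕ, 1 ≤ n → ∀ v : Fin n → ℝ, (∀ i, 0 < v i) →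
      gini a b v ≤ gini c d v) : min a b ≤ min c d := by
  have H' : ∀ n : ℕ, 1 ≤ n → ∀ v : Fin n → ℝ, (∀ i, 0 < v i) →
      gini (-c) (-d) v ≤ gini (-a) (-b) v := by
    intro k hk v hv
    have hk0 : 0 < k := hk
    have hvinv : ∀ i, 0 < (v i)⁻¹ := fun i => inv_pos.2 (hv i)
    have h := H k hk (fun i => (v i)⁻¹) hvinv
    have e1 : gini a b (fun i => (v i)⁻¹) = (gini (-a) (-b) v)⁻¹ := by
      have := gini_dual (-a) (-b) hv
      rwa [neg_neg, neg_neg] at this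
    have e2 : gini c d (fun i => (v i)⁻¹) = (gini (-c) (-d) v)⁻¹ := by
      have := gini_dual (-c) (-d) hv
      rwa [neg_neg, neg_neg] at this
    rw [e1, e2] at h
    have p1 : 0 < gini (-a) (-b) v := gini_pos hk0 hv _ _
    have p2 : 0 < gini (-c) (-d) v := gini_pos hk0 hv _ _
    calc gini (-c) (-d) v = ((gini (-c) (-d) v)⁻¹)⁻¹ := (inv_inv _).symm
      _ ≤ ((gini (-a) (-b) v)⁻¹)⁻¹ := inv_anti₀ (inv_pos.2 p1) h
      _ = gini (-a) (-b) v := inv_inv _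
  have := nec_max (-c) (-d) (-a) (-b) H'
  rw [max_neg_neg, max_neg_neg] at this
  linarith

end GiniAux

/-- if p ≤ s, q ∈ [p,s], r ∈ [p,s], then for all real x, y the mean
G_{x,y} lies (pointwise, on all vectors of positive reals) between G_{p,q} and
G_{r,s} if and only if (x,y) ∈ ([p,r] × [q,s]) ∪ ([q,s] × [p,r]). -/
theorem stmt_2 (p q r s : ℝ) (hps : p ≤ s) (hq : q ∈ Set.Icc p s) (hr : r ∈ Set.Icc p s)
    (x y : ℝ) :
    (∀ n : ℕ, 1 ≤ n → ∀ v : Fin n → ℝ, (∀ i, 0 < v i) →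
        gini p q v ≤ gini x y v ∧ gini x y v ≤ gini r s v) ↔
      (x, y) ∈ (Set.Icc p r ×ˢ Set.Icc q s) ∪ (Set.Icc q s ×ˢ Set.Icc p r) := by
  obtain ⟨hpq, hqs⟩ := hq
  obtain ⟨hpr, hrs⟩ := hr
  constructor
  · intro H
    have H1 : ∀ n : ℕ, 1 ≤ n → ∀ v : Fin n → ℝ, (∀ i, 0 < v i) →
        gini p q v ≤ gini x y v := fun n hn v hv => (H n hn v hv).1
    have H2 : ∀ n : ℕ, 1 ≤ n → ∀ v : Fin n → ℝ, (∀ i, 0 < v i) →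
        gini x y v ≤ gini r s v := fun n hn v hv => (H n hn v hv).2
    have h1 := GiniAux.nec_max p q x y H1
    have h2 := GiniAux.nec_min p q x y H1
    have h3 := GiniAux.nec_max x y r s H2
    have h4 := GiniAux.nec_min x y r s H2
    rw [max_eq_right hpq] at h1
    rw [min_eq_left hpq] at h2
    rw [max_eq_right hrs] at h3
    rw [min_eq_left hrs] at h4
    rcases le_total x y with hxy | hxy
    · left
      rw [min_eq_left hxy] at h2 h4
      rw [max_eq_right hxy] at h1 h3
      exact ⟨⟨h2, h4⟩, ⟨h1, h3⟩⟩
    · right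
      rw [min_eq_right hxy] at h2 h4
      rw [max_eq_left hxy] at h1 h3
      exact ⟨⟨h1, h3⟩, ⟨h2, h4⟩⟩
  · intro hmem n hn v hv
    have hn0 : 0 < n := hn
    have main : ∀ a b : ℝ, a ∈ Set.Icc p r → b ∈ Set.Icc q s →
        gini p q v ≤ gini a b v ∧ gini a b v ≤ gini r s v := by
      intro a b ⟨hpa, har⟩ ⟨hqb, hbs⟩
      constructor
      · calc gini p q v ≤ gini a q v := GiniAux.gini_mono_left hn0 hv hpa
          _ ≤ gini a b v := GiniAux.gini_mono_right hn0 hv hqb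
      · calc gini a b v ≤ gini r b v := GiniAux.gini_mono_left hn0 hv har
          _ ≤ gini r s v := GiniAux.gini_mono_right hn0 hv hbs
    rcases hmem with ⟨hx, hy⟩ | ⟨hx, hy⟩
    · exact main x y hx hy
    · have h := main y x hy hx
      rw [GiniAux.gini_symm hn0 hv y x] at h
      exact h
end

section
/- Let g : ℝ → ℝ satisfy: g(x) < 0 for all x < 0; g is strictly decreasing on (−∞,0); g is continuous on (−∞,0); g(g(x)) = x for all x < 0; and g(x) → −∞ as x → 0⁻. Define Y = {(x,y) ∈ ℝ² : x ≥ 0, or (x < 0 and y ≥ g(x))}. Then Y is an interval-type set for ≼: whenever (p,q) ∈ Y, (r,s) ∈ Y, and (a,b) ∈ ℝ² satisfy (p,q) ≼ (a,b) and (a,b) ≼ (r,s), it follows that (a,b) ∈ Y. -/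
/-- let g be negative, strictly decreasing, continuous and an involution
on (−∞,0), with g(x) → −∞ as x → 0⁻.  Then
Y = {(x,y) : x ≥ 0 or (x < 0 and y ≥ g x)} is an interval-type set for the order
(x,y) ≼ (x',y') ⟺ min(x,y) ≤ min(x',y') ∧ max(x,y) ≤ max(x',y'). -/
theorem stmt_4 (g : ℝ → ℝ)
    (hgneg : ∀ x : ℝ, x < 0 → g x < 0)
    (hganti : StrictAntiOn g (Set.Iio (0 : ℝ)))
    (hgcont : ContinuousOn g (Set.Iio (0 : ℝ)))
    (hginv : ∀ x : ℝ, x < 0 → g (g x) = x)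
    (hglim : Filter.Tendsto g (nhdsWithin 0 (Set.Iio (0 : ℝ))) Filter.atBot)
    (p q r s a b : ℝ)
    (hpq : 0 ≤ p ∨ (p < 0 ∧ g p ≤ q))
    (hrs : 0 ≤ r ∨ (r < 0 ∧ g r ≤ s))
    (h1 : min p q ≤ min a b ∧ max p q ≤ max a b)
    (h2 : min a b ≤ min r s ∧ max a b ≤ max r s) :
    0 ≤ a ∨ (a < 0 ∧ g a ≤ b) := by
  have anti : AntitoneOn g (Set.Iio (0 : ℝ)) := hganti.antitoneOn
  by_cases ha : 0 ≤ a
  · exact Or.inl ha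
  push_neg at ha
  refine Or.inr ⟨ha, ?_⟩
  by_cases hb : 0 ≤ b
  · exact (hgneg a ha).le.trans hb
  push_neg at hb
  have hmab : max a b < 0 := max_lt ha hb
  have hMpq : max p q < 0 := lt_of_le_of_lt h1.2 hmab
  have hp : p < 0 := (le_max_left p q).trans_lt hMpq
  have hq : q < 0 := (le_max_right p q).trans_lt hMpq
  have hgp : g p ≤ q := by
    rcases hpq with h | h
    · exact absurd h (not_le.mpr hp)
    · exact h.2
  -- membership in min/max form
  have key : g (min p q) ≤ max p q := by
    rcases le_total p q with h | h
    · rw [min_eq_left h, max_eq_right h]; exact hgp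
    · rw [min_eq_right h, max_eq_left h]
      have : g q ≤ g (g p) := anti (hgneg p hp) hq hgp
      rwa [hginv p hp] at this
  have hminab : min a b < 0 := lt_of_le_of_lt (min_le_left a b) ha
  have hminpq : min p q < 0 := lt_of_le_of_lt (min_le_left p q) hp
  have key2 : g (min a b) ≤ max a b :=
    le_trans (le_trans (anti hminpq hminab h1.1) key) h1.2
  rcases le_total a b with h | h
  · rwa [min_eq_left h, max_eq_right h] at key2
  · rw [min_eq_right h, max_eq_left h] at key2
    have : g a ≤ g (g b) := anti (hgneg b hb) ha key2
    rwa [hginv b hb] at this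
end

section
/- Let f : ℝ → ℝ satisfy: f(x) > 0 for all x > 0; f is strictly decreasing on (0,∞); f is continuous on (0,∞); f(f(x)) = x for all x > 0; and f(x) → +∞ as x → 0⁺. Let g : ℝ → ℝ satisfy: g(x) < 0 for all x < 0; g is strictly decreasing on (−∞,0); g is continuous on (−∞,0); g(g(x)) = x for all x < 0; and g(x) → −∞ as x → 0⁻. Define Z = {(x,y) ∈ ℝ² : (x < 0 and y ≥ g(x)), or x = 0, or (x > 0 and y ≤ f(x))}. Then Z is an interval-type set for ≼: whenever (p,q) ∈ Z, (r,s) ∈ Z, and (a,b) ∈ ℝ² satisfy (p,q) ≼ (a,b) and (a,b) ≼ (r,s), it follows that (a,b) ∈ Z. -/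
/-- with f as in Statement 3 and g as in Statement 4, the set
Z = {(x,y) : (x < 0 and y ≥ g x) or x = 0 or (x > 0 and y ≤ f x)} is an
interval-type set for the order
(x,y) ≼ (x',y') ⟺ min(x,y) ≤ min(x',y') ∧ max(x,y) ≤ max(x',y'). -/
theorem stmt_5 (f g : ℝ → ℝ)
    (hfpos : ∀ x : ℝ, 0 < x → 0 < f x)
    (hfanti : StrictAntiOn f (Set.Ioi (0 : ℝ)))
    (hfcont : ContinuousOn f (Set.Ioi (0 : ℝ)))
    (hfinv : ∀ x : ℝ, 0 < x → f (f x) = x)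
    (hflim : Filter.Tendsto f (nhdsWithin 0 (Set.Ioi (0 : ℝ))) Filter.atTop)
    (hgneg : ∀ x : ℝ, x < 0 → g x < 0)
    (hganti : StrictAntiOn g (Set.Iio (0 : ℝ)))
    (hgcont : ContinuousOn g (Set.Iio (0 : ℝ)))
    (hginv : ∀ x : ℝ, x < 0 → g (g x) = x)
    (hglim : Filter.Tendsto g (nhdsWithin 0 (Set.Iio (0 : ℝ))) Filter.atBot)
    (p q r s a b : ℝ)
    (hpq : (p < 0 ∧ g p ≤ q) ∨ p = 0 ∨ (0 < p ∧ q ≤ f p))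
    (hrs : (r < 0 ∧ g r ≤ s) ∨ r = 0 ∨ (0 < r ∧ s ≤ f r))
    (h1 : min p q ≤ min a b ∧ max p q ≤ max a b)
    (h2 : min a b ≤ min r s ∧ max a b ≤ max r s) :
    (a < 0 ∧ g a ≤ b) ∨ a = 0 ∨ (0 < a ∧ b ≤ f a) := by
  rcases lt_trichotomy a 0 with ha | ha | ha
  · -- case a < 0 : show g a ≤ b, using (p,q)
    left
    refine ⟨ha, ?_⟩
    by_contra hb
    push_neg at hb
    have hga : g a < 0 := hgneg a ha
    have hb0 : b < 0 := hb.trans hga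
    have hmax : max a b < 0 := max_lt ha hb0
    -- min a b < g (max a b)
    have hmin : min a b < g (max a b) := by
      rcases le_total a b with h | h
      · rw [min_eq_left h, max_eq_right h]
        have := hganti (Set.mem_Iio.2 hb0) (Set.mem_Iio.2 hga) hb
        rwa [hginv a ha] at this
      · rw [min_eq_right h, max_eq_left h]
        exact hb
    -- transfer to (p,q)
    have hmaxpq : max p q < 0 := lt_of_le_of_lt h1.2 hmax
    have hp0 : p < 0 := lt_of_le_of_lt (le_max_left p q) hmaxpq
    have hq0 : q < 0 := lt_of_le_of_lt (le_max_right p q) hmaxpq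
    have hgle : g (max a b) ≤ g (max p q) :=
      hganti.antitoneOn (Set.mem_Iio.2 hmaxpq) (Set.mem_Iio.2 hmax) h1.2
    have hminpq : min p q < g (max p q) :=
      lt_of_le_of_lt h1.1 (lt_of_lt_of_le hmin hgle)
    have hgp : g p ≤ q := by
      rcases hpq with ⟨_, h⟩ | h | ⟨h, _⟩
      · exact h
      · exact absurd h hp0.ne
      · exact absurd h (not_lt.2 hp0.le)
    rcases le_total p q with h | h
    · rw [min_eq_left h, max_eq_right h] at hminpq
      have : g q ≤ g (g p) :=
        hganti.antitoneOn (Set.mem_Iio.2 (hgneg p hp0)) (Set.mem_Iio.2 hq0) hgp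
      rw [hginv p hp0] at this
      exact absurd hminpq (not_lt.2 this)
    · rw [min_eq_right h, max_eq_left h] at hminpq
      exact absurd hminpq (not_lt.2 hgp)
  · exact Or.inr (Or.inl ha)
  · -- case 0 < a : show b ≤ f a, using (r,s)
    right; right
    refine ⟨ha, ?_⟩
    by_contra hb
    push_neg at hb
    have hfa : 0 < f a := hfpos a ha
    have hb0 : 0 < b := hfa.trans hb
    have hmin : 0 < min a b := lt_min ha hb0
    have hmax : f (min a b) < max a b := by
      rcases le_total a b with h | h
      · rw [min_eq_left h, max_eq_right h]
        exact hb
      · rw [min_eq_right h, max_eq_left h]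
        have := hfanti (Set.mem_Ioi.2 hfa) (Set.mem_Ioi.2 hb0) hb
        rwa [hfinv a ha] at this
    have hminrs : 0 < min r s := lt_of_lt_of_le hmin h2.1
    have hr0 : 0 < r := lt_of_lt_of_le hminrs (min_le_left r s)
    have hs0 : 0 < s := lt_of_lt_of_le hminrs (min_le_right r s)
    have hfle : f (min r s) ≤ f (min a b) :=
      hfanti.antitoneOn (Set.mem_Ioi.2 hmin) (Set.mem_Ioi.2 hminrs) h2.1
    have hmaxrs : f (min r s) < max r s :=
      lt_of_lt_of_le (hfle.trans_lt hmax) h2.2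
    have hfr : s ≤ f r := by
      rcases hrs with ⟨h, _⟩ | h | ⟨_, h⟩
      · exact absurd h (not_lt.2 hr0.le)
      · exact absurd h hr0.ne'
      · exact h
    rcases le_total r s with h | h
    · rw [min_eq_left h, max_eq_right h] at hmaxrs
      exact absurd hmaxrs (not_lt.2 hfr)
    · rw [min_eq_right h, max_eq_left h] at hmaxrs
      have : f (f r) ≤ f s :=
        hfanti.antitoneOn (Set.mem_Ioi.2 hs0) (Set.mem_Ioi.2 (hfpos r hr0)) hfr
      rw [hfinv r hr0] at this
      exact absurd hmaxrs (not_lt.2 this)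
end
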